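/- arXiv:1405.0090 — 4 statements merged into one kernel-verified Lean document; each statement's English description precedes it below -/
import Mathlib

section
/- If G is a perfect group and H is a group with a surjective homomorphism f : H → G whose kernel is contained in the hypercenter of H, then H = L * Z where L is the last term of the derived series of H (the perfect core), Z is the hypercenter of H, and [L, Z] = 1 (i.e., H is a central product of its perfect core and its hypercenter). -/
open Subgroup hiding upperCentralSeries upperCentralSeries_zero upperCentralSeries_mono mem_upperCentralSeries_succ_iff

section aux

variable {H : Type*} [Group H] [Finite H]

/-- The upper central series of a finite group stabilizes. -/
lemma aux_ucs_stab : ∃ N : ℕ, (⨆ n, upperCentralSeries H n) = upperCentralSeries H N := by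
  have : Finite (Subgroup H) := inferInstance
  obtain ⟨N, hN⟩ := wellFoundedGT_iff_monotone_chain_condition.mp
    (Finite.to_wellFoundedGT (α := Subgroup H))
    ⟨upperCentralSeries H, upperCentralSeries_mono H⟩
  refine ⟨N, le_antisymm (iSup_le fun n => ?_) (le_iSup _ N)⟩
  rcases le_or_gt n N with h | h
  · exact upperCentralSeries_mono H h
  · exact (hN n h.le).ge

/-- The derived series of a finite group stabilizes at a perfect subgroup. -/
lemma aux_ds_stab : ∃ M : ℕ, (⨅ n, derivedSeries H n) = derivedSeries H M ∧
    ⁅derivedSeries H M, derivedSeries H M⁆ = derivedSeries H M := by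
  have hanti : Antitone (derivedSeries H) := antitone_nat_of_succ_le fun n => by
    have : (derivedSeries H n).Normal := derivedSeries_normal H n
    rw [derivedSeries_succ]
    exact commutator_le_left _ _
  obtain ⟨M, hM⟩ := wellFoundedGT_iff_monotone_chain_condition.mp
    (Finite.to_wellFoundedGT (α := (Subgroup H)ᵒᵈ))
    ⟨fun n => OrderDual.toDual (derivedSeries H n), fun a b h => hanti h⟩
  have hstab : ∀ m, M ≤ m → derivedSeries H m = derivedSeries H M :=
    fun m hm => (congrArg OrderDual.ofDual (hM m hm)).symm
  refine ⟨M, le_antisymm (iInf_le _ M) (le_iInf fun n => ?_), ?_⟩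
  · rcases le_or_gt n M with h | h
    · exact hanti h
    · exact (hstab n h.le).ge
  · have := hstab (M + 1) (Nat.le_succ M)
    rwa [derivedSeries_succ] at this

end aux

/-- If `G` is perfect, `f : H → G` is surjective with kernel in the hypercenter of the
finite group `H`, then `H` is the central product of its perfect core `L` (the terminal
member of the derived series, here `⨅ n, derivedSeries H n`) and its hypercenter `Z`
(the terminal member of the upper central series, here `⨆ n, upperCentralSeries H n`):
`L ⊔ Z = ⊤` and `⁅L, Z⁆ = ⊥`. -/
theorem stmt_0 {H G : Type*} [Group H] [Finite H] [Group G]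
    (hG : ⁅(⊤ : Subgroup G), (⊤ : Subgroup G)⁆ = ⊤)
    (f : H →* G) (hf : Function.Surjective f)
    (hker : f.ker ≤ ⨆ n, upperCentralSeries H n) :
    (⨅ n, derivedSeries H n) ⊔ (⨆ n, upperCentralSeries H n) = ⊤ ∧
    ⁅(⨅ n, derivedSeries H n), (⨆ n, upperCentralSeries H n)⁆ = ⊥ := by
  obtain ⟨N, hN⟩ := aux_ucs_stab (H := H)
  obtain ⟨M, hM, hperf⟩ := aux_ds_stab (H := H)
  set L : Subgroup H := ⨅ n, derivedSeries H n with hL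
  -- G is perfect: derived series of G is ⊤
  have hGperf : ∀ n, derivedSeries G n = ⊤ := by
    intro n
    induction n with
    | zero => rfl
    | succ n ih => rw [derivedSeries_succ, ih, hG]
  constructor
  · -- sup = ⊤
    have hmap : (derivedSeries H M).map f = ⊤ := by
      rw [map_derivedSeries_eq hf, hGperf]
    have : derivedSeries H M ⊔ f.ker = ⊤ := by
      have := congrArg (Subgroup.comap f) hmap
      rwa [Subgroup.comap_map_eq, comap_top f] at this
    rw [eq_top_iff, ← this]
    exact sup_le_sup (hM.ge) hker
  · -- commutator = ⊥
    have key : ∀ n, ⁅L, upperCentralSeries H n⁆ = ⊥ := by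
      intro n
      induction n with
      | zero =>
        rw [show upperCentralSeries H 0 = ⊥ from upperCentralSeries_zero H, commutator_bot_right]
      | succ n ih =>
        have hLperf : ⁅L, L⁆ = L := by rw [hM]; exact hperf
        have hZle : ⁅upperCentralSeries H (n + 1), L⁆ ≤ upperCentralSeries H n := by
          rw [commutator_le]
          intro g₁ h₁ g₂ _
          exact mem_upperCentralSeries_succ_iff.mp h₁ g₂
        have h1 : ⁅⁅L, upperCentralSeries H (n + 1)⁆, L⁆ = ⊥ := by
          rw [eq_bot_iff]
          calc ⁅⁅L, upperCentralSeries H (n + 1)⁆, L⁆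
              ≤ ⁅upperCentralSeries H n, L⁆ := by
                apply commutator_mono _ le_rfl
                rw [commutator_comm]; exact hZle
            _ = ⊥ := by rw [commutator_comm, ih]
        have h2 : ⁅⁅upperCentralSeries H (n + 1), L⁆, L⁆ = ⊥ := by
          rw [eq_bot_iff]
          calc ⁅⁅upperCentralSeries H (n + 1), L⁆, L⁆
              ≤ ⁅upperCentralSeries H n, L⁆ := commutator_mono hZle le_rfl
            _ = ⊥ := by rw [commutator_comm, ih]
        have := commutator_commutator_eq_bot_of_rotate h1 h2
        rwa [hLperf] at this
    rw [hN]
    exact key N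
end

section
/- In a finite group G, for any subgroup H, the intersection of all subnormal subgroups of G containing H is itself a subnormal subgroup of G containing H (the subnormal closure of H exists). -/
/-- A subgroup `H` of `G` is subnormal if there is a finite chain
`H = c 0 ≤ c 1 ≤ ... ≤ c n = ⊤` with each term normal in the next. -/
def IsSubnormal {G : Type*} [Group G] (H : Subgroup G) : Prop :=
  ∃ (n : ℕ) (c : ℕ → Subgroup G), c 0 = H ∧ c n = ⊤ ∧
    ∀ i < n, c i ≤ c (i + 1) ∧ ((c i).subgroupOf (c (i + 1))).Normal

/-- `K` is subnormal in `L` if there is a chain from `K` to `L`. -/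
def SubnormalIn {G : Type*} [Group G] (K L : Subgroup G) : Prop :=
  ∃ (n : ℕ) (c : ℕ → Subgroup G), c 0 = K ∧ c n = L ∧
    ∀ i < n, c i ≤ c (i + 1) ∧ ((c i).subgroupOf (c (i + 1))).Normal

lemma subnormalIn_trans {G : Type*} [Group G] {A B C : Subgroup G}
    (hab : SubnormalIn A B) (hbc : SubnormalIn B C) : SubnormalIn A C := by
  obtain ⟨m, c, hc0, hcm, hc⟩ := hab
  obtain ⟨n, d, hd0, hdn, hd⟩ := hbc
  refine ⟨m + n, fun i => if i < m then c i else d (i - m), ?_, ?_, ?_⟩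
  · by_cases hm : 0 < m
    · simp only [if_pos hm]; exact hc0
    · have hm0 : m = 0 := by omega
      subst hm0
      simp only [Nat.lt_irrefl, if_neg, Nat.sub_zero, if_false]
      rw [hd0, ← hcm]; exact hc0
  · simp only [if_neg (by omega : ¬ m + n < m)]
    rw [Nat.add_sub_cancel_left]; exact hdn
  · intro i hi
    show (if i < m then c i else d (i - m)) ≤ (if i + 1 < m then c (i + 1) else d (i + 1 - m)) ∧
      ((if i < m then c i else d (i - m)).subgroupOf
        (if i + 1 < m then c (i + 1) else d (i + 1 - m))).Normal
    by_cases h1 : i + 1 < m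
    · have h0 : i < m := by omega
      rw [if_pos h0, if_pos h1]
      exact hc i h0
    · by_cases h0 : i < m
      · rw [if_pos h0, if_neg h1, show i + 1 - m = 0 by omega, hd0, ← hcm,
          show m = i + 1 by omega]
        exact hc i h0
      · rw [if_neg h0, if_neg h1, show i + 1 - m = (i - m) + 1 by omega]
        exact hd (i - m) (by omega)

lemma inf_subgroupOf_normal {G : Type*} [Group G] {A B L : Subgroup G}
    (h : (A.subgroupOf B).Normal) : ((A ⊓ L).subgroupOf (B ⊓ L)).Normal := by
  constructor
  intro x hx g
  rw [Subgroup.mem_subgroupOf] at hx ⊢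
  obtain ⟨hxA, hxL⟩ := hx
  constructor
  · have := h.conj_mem ⟨(x : G), x.2.1⟩ (by rwa [Subgroup.mem_subgroupOf]) ⟨(g : G), g.2.1⟩
    rwa [Subgroup.mem_subgroupOf] at this
  · exact Subgroup.mul_mem _ (Subgroup.mul_mem _ g.2.2 hxL) (Subgroup.inv_mem _ g.2.2)

lemma subnormalIn_inf_right {G : Type*} [Group G] {A B : Subgroup G} (L : Subgroup G)
    (h : SubnormalIn A B) : SubnormalIn (A ⊓ L) (B ⊓ L) := by
  obtain ⟨n, c, hc0, hcn, hc⟩ := h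
  refine ⟨n, fun i => c i ⊓ L, ?_, ?_, fun i hi =>
    ⟨inf_le_inf_right L (hc i hi).1, inf_subgroupOf_normal (hc i hi).2⟩⟩
  · show c 0 ⊓ L = A ⊓ L; rw [hc0]
  · show c n ⊓ L = B ⊓ L; rw [hcn]

lemma isSubnormal_iff {G : Type*} [Group G] {K : Subgroup G} :
    IsSubnormal K ↔ SubnormalIn K ⊤ := Iff.rfl

lemma isSubnormal_top {G : Type*} [Group G] : IsSubnormal (⊤ : Subgroup G) :=
  ⟨0, fun _ => ⊤, rfl, rfl, by omega⟩

lemma isSubnormal_inf {G : Type*} [Group G] {K L : Subgroup G}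
    (hK : IsSubnormal K) (hL : IsSubnormal L) : IsSubnormal (K ⊓ L) := by
  rw [isSubnormal_iff] at *
  have h1 : SubnormalIn (K ⊓ L) (⊤ ⊓ L) := subnormalIn_inf_right L hK
  rw [top_inf_eq] at h1
  exact subnormalIn_trans h1 hL

lemma isSubnormal_sInf {G : Type*} [Group G] {S : Set (Subgroup G)} (hS : S.Finite)
    (h : ∀ K ∈ S, IsSubnormal K) : IsSubnormal (sInf S) :=
  Set.Finite.induction_on
    (motive := fun S _ => (∀ K ∈ S, IsSubnormal K) → IsSubnormal (sInf S)) S hS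
    (fun _ => by rw [sInf_empty]; exact isSubnormal_top)
    (fun {a s} _ _ ih h => by
      rw [sInf_insert]
      exact isSubnormal_inf (h a (Set.mem_insert a s))
        (ih fun K hK => h K (Set.mem_insert_of_mem a hK))) h

/-- In a finite group, the intersection of all subnormal subgroups containing `H`
is itself a subnormal subgroup containing `H` (the subnormal closure exists). -/
theorem stmt_3 {G : Type*} [Group G] [Finite G] (H : Subgroup G) :
    H ≤ sInf {K : Subgroup G | H ≤ K ∧ IsSubnormal K} ∧
    IsSubnormal (sInf {K : Subgroup G | H ≤ K ∧ IsSubnormal K}) := by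
  constructor
  · exact le_sInf fun K hK => hK.1
  · exact isSubnormal_sInf (Set.toFinite _) fun K hK => hK.2
end

section
/- If f : A → B and g : B → C are surjective group homomorphisms with ker f ≤ Z(A), ker g ≤ Z(B), and A is perfect, then ker(g ∘ f) ≤ Z(A); i.e., the composition of central extensions of a perfect group is a central extension. -/
open scoped commutatorElement IsMulCommutative

/-- The composition of central extensions of a perfect group is a central extension:
if `f : A → B` and `g : B → C` are surjective with `ker f ≤ Z(A)`, `ker g ≤ Z(B)`,
and `A` is perfect, then `ker (g ∘ f) ≤ Z(A)`. -/
theorem stmt_14 {A B C : Type*} [Group A] [Group B] [Group C]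
    (f : A →* B) (g : B →* C)
    (hf : Function.Surjective f) (hg : Function.Surjective g)
    (hkf : f.ker ≤ Subgroup.center A) (hkg : g.ker ≤ Subgroup.center B)
    (hperf : ⁅(⊤ : Subgroup A), (⊤ : Subgroup A)⁆ = ⊤) :
    (g.comp f).ker ≤ Subgroup.center A := by
  intro z hz
  have hfz : f z ∈ Subgroup.center B := hkg (by simpa using hz)
  -- each commutator ⁅z, a⁆ lies in ker f, hence in the center of A
  have hcomm : ∀ a : A, ⁅z, a⁆ ∈ Subgroup.center A := by
    intro a
    apply hkf
    have : f ⁅z, a⁆ = ⁅f z, f a⁆ := by simp [commutatorElement_def]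
    rw [MonoidHom.mem_ker, this]
    have := (Subgroup.mem_center_iff.mp hfz) (f a)
    simp [commutatorElement_def, ← this, mul_assoc]
  -- the map a ↦ ⁅z, a⁆ is a homomorphism into the (abelian) center
  let φ : A →* Subgroup.center A :=
    { toFun := fun a => ⟨⁅z, a⁆, hcomm a⟩
      map_one' := by simp
      map_mul' := by
        intro a b
        ext
        show ⁅z, a * b⁆ = ⁅z, a⁆ * ⁅z, b⁆
        have hb := (Subgroup.mem_center_iff.mp (hcomm b)) a
        have key : ⁅z, a * b⁆ = ⁅z, a⁆ * (a * ⁅z, b⁆ * a⁻¹) := by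
          simp only [commutatorElement_def]; group
        rw [key, hb, mul_assoc, mul_inv_cancel, mul_one] }
  -- φ kills the commutator subgroup, which is all of A
  have hker : commutator A ≤ φ.ker := Abelianization.commutator_subset_ker φ
  have : φ.ker = ⊤ := by
    rw [eq_top_iff]
    calc (⊤ : Subgroup A) = commutator A := by rw [commutator_def, hperf]
      _ ≤ φ.ker := hker
  have hφ : ∀ a : A, ⁅z, a⁆ = 1 := by
    intro a
    have : φ a = 1 := by
      have h2 := this ▸ Subgroup.mem_top a
      exact h2
    simpa [φ] using congrArg Subtype.val this
  rw [Subgroup.mem_center_iff]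
  intro a
  have := hφ a
  rw [commutatorElement_def] at this
  have : z * a * z⁻¹ = a := by
    have := congrArg (· * a) this
    simpa [mul_assoc] using this
  calc a * z = (z * a * z⁻¹) * z := by rw [this]
    _ = z * a := by group
end

section
/- Let φ : Γ → G be a homomorphism of groups where Γ is finite. If K = ker φ is contained in Z_n(Γ) for some n, and φ(Γ) is subnormal in G, then Γ/𝒦 ≅ Γ where 𝒦 is the terminal member of the series K_1 = K, K_{i+1} = [Γ, K_i]; in particular 𝒦 = 1. -/
/-- Let `φ : Γ → G` with `Γ` finite, `K = ker φ ≤ Z_n(Γ)` and `φ(Γ)` subnormal in `G`.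
If `𝒦 = Kser t` is the terminal member of the series `K₁ = K`, `K_{i+1} = ⁅Γ, K_i⁆`,
then `𝒦 = 1` and `Γ/𝒦 ≅ Γ`. (As `𝒦` is normal, `normalClosure 𝒦 = 𝒦`.) -/
theorem stmt_18 {Γ G : Type*} [Group Γ] [Finite Γ] [Group G] (φ : Γ →* G)
    (n : ℕ) (hker : φ.ker ≤ upperCentralSeries Γ n)
    (hrange : IsSubnormal φ.range)
    (Kser : ℕ → Subgroup Γ) (h0 : Kser 0 = φ.ker)
    (hs : ∀ i, Kser (i + 1) = ⁅(⊤ : Subgroup Γ), Kser i⁆)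
    (t : ℕ) (ht : ∀ s ≥ t, Kser s = Kser t) :
    Kser t = ⊥ ∧
    Nonempty ((Γ ⧸ Subgroup.normalClosure ((Kser t : Subgroup Γ) : Set Γ)) ≃* Γ) := by
  have key : ∀ i, Kser i ≤ upperCentralSeries Γ (n - i) := by
    intro i
    induction i with
    | zero => simpa [h0] using hker
    | succ i ih =>
      rw [hs i]
      rcases le_or_gt n i with h | h
      · have h1 : n - i = 0 := Nat.sub_eq_zero_of_le h
        rw [h1] at ih
        have : Kser i ≤ ⊥ := ih
        calc ⁅(⊤ : Subgroup Γ), Kser i⁆ ≤ ⁅(⊤ : Subgroup Γ), (⊥ : Subgroup Γ)⁆ :=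
              Subgroup.commutator_mono le_rfl this
          _ = ⊥ := by simp
          _ ≤ _ := bot_le
      · have h1 : n - i = (n - (i + 1)) + 1 := by omega
        rw [h1] at ih
        apply Subgroup.commutator_le.mpr
        intro g _ h hh
        have := ih hh
        replace this := Subgroup.mem_upperCentralSeries_succ_iff.mp this
        have h2 := this g
        have : (h * g * h⁻¹ * g⁻¹)⁻¹ ∈ upperCentralSeries Γ (n - (i + 1)) :=
          (upperCentralSeries Γ (n - (i + 1))).inv_mem h2
        simpa [commutatorElement_def, mul_assoc] using this
  have hbot : Kser t = ⊥ := by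
    have h1 : Kser (t + n) = Kser t := ht (t + n) (Nat.le_add_right t n)
    have h2 := key (t + n)
    rw [h1] at h2
    have : n - (t + n) = 0 := by omega
    rw [this] at h2
    exact le_bot_iff.mp h2
  refine ⟨hbot, ?_⟩
  rw [hbot]
  have heq : Subgroup.normalClosure ((⊥ : Subgroup Γ) : Set Γ) = ⊥ :=
    Subgroup.normalClosure_eq_self ⊥
  exact ⟨(QuotientGroup.quotientMulEquivOfEq heq).trans (QuotientGroup.quotientBot (G := Γ))⟩
end
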